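/- arXiv:1805.05483 — 5 statements merged into one kernel-verified Lean document; each statement's English description precedes it below -/
import Mathlib

section
/- For a finite simple graph G and a vertex v_i of G of degree d_i, the vertex energy satisfies E_G(v_i) ≤ √(d_i), with equality if and only if the connected component of G containing v_i is a star and v_i is its center. -/
open Matrix Finset

/-- The energy of the vertex `i` of a finite simple graph `G`:
the `(i,i)` entry of `|A| = (A Aᴴ)^{1/2}`, where `A` is the adjacency matrix. -/
noncomputable def vertexEnergy {n : ℕ} (G : SimpleGraph (Fin n)) [DecidableRel G.Adj]
    (i : Fin n) : ℝ :=
  ((Matrix.posSemidef_self_mul_conjTranspose (G.adjMatrix ℝ)).1.eigenvectorUnitary.1 *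
    diagonal ((RCLike.ofReal : ℝ → ℝ) ∘ (√·) ∘ (Matrix.posSemidef_self_mul_conjTranspose (G.adjMatrix ℝ)).1.eigenvalues) *
    (star (Matrix.posSemidef_self_mul_conjTranspose (G.adjMatrix ℝ)).1.eigenvectorUnitary :
      Matrix (Fin n) (Fin n) ℝ)) i i

/-- If no vertex `j ≠ i` shares a common neighbor with `i`, then every vertex with
a walk to `i` is `i` or a neighbor of `i`. -/
private lemma walk_aux {n : ℕ} {G : SimpleGraph (Fin n)} {i : Fin n}
    (hz : ∀ j w : Fin n, j ≠ i → ¬(G.Adj j w ∧ G.Adj w i)) :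
    ∀ u v : Fin n, G.Walk u v → v = i → u = i ∨ G.Adj i u := by
  intro u v p
  induction p with
  | nil => intro h; exact Or.inl h
  | @cons a b c hab p ih =>
    intro hc
    rcases ih hc with h | h
    · subst h; exact Or.inr hab.symm
    · by_cases ha : a = i
      · exact Or.inl ha
      · exact absurd ⟨hab, h.symm⟩ (hz a b ha)

private lemma energy_main {n : ℕ} (G : SimpleGraph (Fin n)) [DecidableRel G.Adj] (i : Fin n) :
    vertexEnergy G i
      ≤ Real.sqrt (G.degree i) ∧
    (vertexEnergy G i
        = Real.sqrt (G.degree i) ↔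
      ∀ u w : Fin n, G.Reachable i u → G.Adj u w → u = i ∨ w = i) := by
  classical
  have hPSD := Matrix.posSemidef_self_mul_conjTranspose (G.adjMatrix ℝ)
  unfold vertexEnergy
  set U : Matrix (Fin n) (Fin n) ℝ := hPSD.1.eigenvectorUnitary.1 with hU
  set D : Matrix (Fin n) (Fin n) ℝ :=
    diagonal ((RCLike.ofReal : ℝ → ℝ) ∘ (√·) ∘ hPSD.1.eigenvalues) with hD
  set S : Matrix (Fin n) (Fin n) ℝ := U * D * star U with hSdef
  change S i i ≤ _ ∧ (S i i = _ ↔ _)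
  have hUU : star U * U = 1 := Unitary.coe_star_mul_self _
  have hMS : S * S = G.adjMatrix ℝ * (G.adjMatrix ℝ)ᴴ := by
    have hDD : D * D = diagonal ((RCLike.ofReal : ℝ → ℝ) ∘ hPSD.1.eigenvalues) := by
      rw [hD, diagonal_mul_diagonal]; congr 1; ext k
      simp only [Function.comp_apply, RCLike.ofReal_real_eq_id, id]
      exact Real.mul_self_sqrt (hPSD.eigenvalues_nonneg k)
    have hspec := hPSD.1.spectral_theorem
    rw [Unitary.conjStarAlgAut_apply] at hspec
    calc S * S = U * (D * (star U * U) * D) * star U := by simp only [hSdef, Matrix.mul_assoc]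
      _ = U * diagonal ((RCLike.ofReal : ℝ → ℝ) ∘ hPSD.1.eigenvalues) * star U := by
        rw [hUU, Matrix.mul_one, hDD, Matrix.mul_assoc]
      _ = G.adjMatrix ℝ * (G.adjMatrix ℝ)ᴴ := hspec.symm
  have hSpsd : S.PosSemidef := by
    have hDpsd : D.PosSemidef := posSemidef_diagonal_iff.mpr fun k => by
      simp [Real.sqrt_nonneg]
    have := hDpsd.mul_mul_conjTranspose_same U
    rwa [← star_eq_conjTranspose] at this
  have hAH : (G.adjMatrix ℝ)ᴴ = G.adjMatrix ℝ := by
    rw [show (G.adjMatrix ℝ)ᴴ = (G.adjMatrix ℝ)ᵀ from by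
      ext j k; simp [Matrix.conjTranspose_apply]]
    exact G.transpose_adjMatrix
  have hSS : S * S = G.adjMatrix ℝ * G.adjMatrix ℝ := by
    rw [hMS, hAH]
  have hSsymm : ∀ j k, S j k = S k j := by
    intro j k
    have := congrFun (congrFun hSpsd.1 k) j
    simpa [conjTranspose_apply] using this
  have hdiag : (S * S) i i = (G.degree i : ℝ) := by
    rw [hSS]; exact G.adjMatrix_mul_self_apply_self i
  have hsum : (S * S) i i = ∑ j, (S i j) ^ 2 := by
    rw [Matrix.mul_apply]
    exact Finset.sum_congr rfl fun j _ => by rw [hSsymm j i, sq]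
  have hd0 : (0 : ℝ) ≤ (G.degree i : ℝ) := Nat.cast_nonneg _
  have hEnonneg : 0 ≤ S i i := by
    have := hSpsd.dotProduct_mulVec_nonneg (Pi.single i 1)
    simpa [dotProduct, Pi.single_apply] using this
  have hsq_le : (S i i) ^ 2 ≤ (G.degree i : ℝ) := by
    calc (S i i) ^ 2 ≤ ∑ j, (S i j) ^ 2 :=
          Finset.single_le_sum (f := fun j => (S i j) ^ 2)
            (fun j _ => sq_nonneg _) (mem_univ i)
      _ = (S * S) i i := hsum.symm
      _ = (G.degree i : ℝ) := hdiag
  have hle : S i i ≤ Real.sqrt (G.degree i) := Real.le_sqrt_of_sq_le hsq_le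
  refine ⟨hle, ?_, ?_⟩
  · -- equality → star condition
    intro heq
    have h2 : (S i i) ^ 2 = (G.degree i : ℝ) := by rw [heq, Real.sq_sqrt hd0]
    have h3 : ∑ j, (S i j) ^ 2 = (G.degree i : ℝ) := by rw [← hsum, hdiag]
    have h4 := Finset.add_sum_erase univ (fun j => (S i j) ^ 2) (mem_univ i)
    have hsum0 : ∑ j ∈ univ.erase i, (S i j) ^ 2 = 0 := by
      beta_reduce at h4; linarith
    have hzero : ∀ j, j ≠ i → S i j = 0 := by
      intro j hj
      have := (Finset.sum_eq_zero_iff_of_nonneg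
        (fun k _ => sq_nonneg (S i k))).mp hsum0 j (by simp [hj])
      exact (pow_eq_zero_iff two_ne_zero).mp this
    have hAA0 : ∀ j, j ≠ i → (G.adjMatrix ℝ * G.adjMatrix ℝ) j i = 0 := by
      intro j hj
      rw [← hSS, Matrix.mul_apply]
      apply Finset.sum_eq_zero
      intro k _
      by_cases hk : k = i
      · subst hk
        rw [show S j k = 0 from by rw [hSsymm]; exact hzero j hj, zero_mul]
      · rw [show S k i = 0 from by rw [hSsymm]; exact hzero k hk, mul_zero]
    have hz : ∀ j w : Fin n, j ≠ i → ¬(G.Adj j w ∧ G.Adj w i) := by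
      rintro j w hj ⟨h1', h2'⟩
      have h0 := hAA0 j hj
      rw [Matrix.mul_apply] at h0
      have hterm : (1 : ℝ) ≤ ∑ k, G.adjMatrix ℝ j k * G.adjMatrix ℝ k i := by
        have : G.adjMatrix ℝ j w * G.adjMatrix ℝ w i = 1 := by
          simp [h1', h2']
        calc (1 : ℝ) = G.adjMatrix ℝ j w * G.adjMatrix ℝ w i := this.symm
          _ ≤ ∑ k, G.adjMatrix ℝ j k * G.adjMatrix ℝ k i :=
            Finset.single_le_sum (f := fun k => G.adjMatrix ℝ j k * G.adjMatrix ℝ k i)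
              (fun k _ => mul_nonneg (by simp [SimpleGraph.adjMatrix_apply]; positivity)
                (by simp [SimpleGraph.adjMatrix_apply]; positivity)) (mem_univ w)
      linarith
    intro u w hr huw
    obtain ⟨p⟩ := hr.symm
    rcases walk_aux hz u i p rfl with h | h
    · exact Or.inl h
    · by_cases hw : w = i
      · exact Or.inr hw
      · exact absurd ⟨huw.symm, h.symm⟩ (hz w u hw)
  · -- star condition → equality
    intro hstar
    have hAA : ∀ j, j ≠ i → (G.adjMatrix ℝ * G.adjMatrix ℝ) j i = 0 := by
      intro j hj
      rw [Matrix.mul_apply]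
      apply Finset.sum_eq_zero
      intro w _
      by_cases h1 : G.Adj j w
      · by_cases h2 : G.Adj w i
        · rcases hstar w j (SimpleGraph.Adj.reachable h2.symm) h1.symm with h | h
          · exact absurd h2 (by rw [h]; exact G.irrefl)
          · exact absurd h hj
        · simp [h2]
      · simp [h1]
    set d : ℝ := (G.degree i : ℝ) with hd
    set c : ℝ := Real.sqrt d with hcdef
    have hc2 : c * c = d := Real.mul_self_sqrt hd0
    by_cases hc : c = 0
    · have : S i i = 0 := le_antisymm (by rw [← hc]; exact hle) hEnonneg
      rw [this, hc]
    · have hcpos : 0 < c := lt_of_le_of_ne (Real.sqrt_nonneg _) (Ne.symm hc)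
      set e : Fin n → ℝ := Pi.single i 1 with he
      have hSSe : (S * S) *ᵥ e = d • e := by
        ext j
        by_cases hj : j = i
        · subst hj
          simp only [he, Matrix.mulVec_single, MulOpposite.op_one, one_smul, Matrix.col_apply, mul_one, Pi.smul_apply,
            Pi.single_eq_same, smul_eq_mul]
          rw [hdiag]
        · simp only [he, Matrix.mulVec_single, MulOpposite.op_one, one_smul, Matrix.col_apply, mul_one, Pi.smul_apply,
            Pi.single_eq_of_ne hj, smul_eq_mul, mul_zero]
          rw [hSS]; exact hAA j hj
      set y : Fin n → ℝ := S *ᵥ e - c • e with hy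
      have hSy : S *ᵥ y = (-c) • y := by
        have hSe2 : S *ᵥ (S *ᵥ e) = d • e := by
          rw [Matrix.mulVec_mulVec, hSSe]
        rw [hy, Matrix.mulVec_sub, Matrix.mulVec_smul, hSe2]
        ext j
        simp only [Pi.sub_apply, Pi.smul_apply, smul_eq_mul, neg_smul, Pi.neg_apply]
        have : d = c * c := hc2.symm
        rw [this]; ring
      have h0 : 0 ≤ y ⬝ᵥ (S *ᵥ y) := by
        have := hSpsd.dotProduct_mulVec_nonneg y
        simpa using this
      rw [hSy] at h0
      have hdp : y ⬝ᵥ ((-c) • y) = (-c) * (y ⬝ᵥ y) := by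
        simp [dotProduct, Finset.mul_sum]
        exact Finset.sum_congr rfl fun k _ => by ring
      rw [hdp] at h0
      have hnn : 0 ≤ y ⬝ᵥ y :=
        Finset.sum_nonneg fun k _ => mul_self_nonneg _
      have hyy : y ⬝ᵥ y = 0 := by nlinarith
      have hy0 : y = 0 := dotProduct_self_eq_zero.mp hyy
      have hyi := congrFun hy0 i
      simp only [hy, he, Pi.sub_apply, Matrix.mulVec_single, MulOpposite.op_one, one_smul, Matrix.col_apply, mul_one,
        Pi.smul_apply, Pi.single_eq_same, smul_eq_mul, mul_one, Pi.zero_apply] at hyi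
      linarith

theorem stmt_2 {n : ℕ} (G : SimpleGraph (Fin n)) [DecidableRel G.Adj] (i : Fin n) :
    vertexEnergy G i ≤ Real.sqrt (G.degree i) ∧
    (vertexEnergy G i = Real.sqrt (G.degree i) ↔
      ∀ u w : Fin n, G.Reachable i u → G.Adj u w → u = i ∨ w = i) := by
  exact energy_main G i
end

section
/- Let G be a finite simple graph of order n with at least one edge and let v_j be a vertex of degree d_j ≥ 1. Then d_j^{3/2} / M_4(G,j)^{1/2} ≤ E_G(v_j), where M_4(G,j) = (A^4)_{jj} is the number of closed walks of length 4 starting and ending at v_j. -/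
open Matrix Finset

/-- Square root of a positive semidefinite real matrix (as in older Mathlib). -/
noncomputable def Matrix.PosSemidef.sqrt {n : ℕ} {M : Matrix (Fin n) (Fin n) ℝ}
    (hM : M.PosSemidef) : Matrix (Fin n) (Fin n) ℝ :=
  hM.1.eigenvectorUnitary.1 * diagonal ((RCLike.ofReal : ℝ → ℝ) ∘ (√·) ∘ hM.1.eigenvalues) *
    (star hM.1.eigenvectorUnitary : Matrix (Fin n) (Fin n) ℝ)

lemma Matrix.PosSemidef.posSemidef_sqrt {n : ℕ} {M : Matrix (Fin n) (Fin n) ℝ}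
    (hM : M.PosSemidef) : hM.sqrt.PosSemidef := by
  unfold Matrix.PosSemidef.sqrt
  have hD : (diagonal ((RCLike.ofReal : ℝ → ℝ) ∘ (√·) ∘ hM.1.eigenvalues)).PosSemidef := by
    refine Matrix.posSemidef_diagonal_iff.mpr fun i => ?_
    simp [Real.sqrt_nonneg]
  have := hD.mul_mul_conjTranspose_same (hM.1.eigenvectorUnitary.1)
  simpa [Matrix.star_eq_conjTranspose] using this

lemma Matrix.PosSemidef.sqrt_mul_self {n : ℕ} {M : Matrix (Fin n) (Fin n) ℝ}
    (hM : M.PosSemidef) : hM.sqrt * hM.sqrt = M := by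
  let C : Matrix (Fin n) (Fin n) ℝ := hM.1.eigenvectorUnitary
  let E := diagonal ((RCLike.ofReal : ℝ → ℝ) ∘ (√·) ∘ hM.1.eigenvalues)
  suffices C * (E * (star C * C) * E) * star C = M by
    unfold Matrix.PosSemidef.sqrt
    simpa only [← mul_assoc] using this
  have : star C * C = 1 := by simp [C]
  rw [this, mul_one]
  have : E * E = diagonal ((RCLike.ofReal : ℝ → ℝ) ∘ hM.1.eigenvalues) := by
    rw [diagonal_mul_diagonal]
    congr! with v
    simp [← pow_two, Real.sq_sqrt (hM.eigenvalues_nonneg v)]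
  rw [this]
  conv_rhs => rw [hM.1.spectral_theorem, Unitary.conjStarAlgAut_apply]

/-- Cauchy–Schwarz for diagonal entries of powers of a symmetric real matrix. -/
lemma sym_pow_diag_sq_le {n : ℕ} (C : Matrix (Fin n) (Fin n) ℝ) (hC : C.IsSymm)
    (p q : ℕ) (j : Fin n) :
    ((C ^ (p + q)) j j) ^ 2 ≤ ((C ^ (2 * p)) j j) * ((C ^ (2 * q)) j j) := by
  have hsym : ∀ r : ℕ, ((C ^ r)ᵀ : Matrix (Fin n) (Fin n) ℝ) = C ^ r := by
    intro r
    rw [Matrix.transpose_pow, hC]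
  have key : ∀ r s : ℕ, (C ^ (r + s)) j j = ∑ k, (C ^ r) j k * (C ^ s) j k := by
    intro r s
    rw [pow_add, Matrix.mul_apply]
    refine Finset.sum_congr rfl fun k _ => ?_
    congr 1
    conv_lhs => rw [← hsym s]
    rfl
  have h1 := Finset.sum_mul_sq_le_sq_mul_sq Finset.univ (fun k => (C ^ p) j k)
      (fun k => (C ^ q) j k)
  calc ((C ^ (p + q)) j j) ^ 2 = (∑ k, (C ^ p) j k * (C ^ q) j k) ^ 2 := by rw [key]
    _ ≤ (∑ k, ((C ^ p) j k) ^ 2) * (∑ k, ((C ^ q) j k) ^ 2) := h1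
    _ = ((C ^ (2 * p)) j j) * ((C ^ (2 * q)) j j) := by
        rw [two_mul, two_mul, key p p, key q q]
        simp [sq]

theorem stmt_5 {n : ℕ} (G : SimpleGraph (Fin n)) [DecidableRel G.Adj]
    (j : Fin n) (hd : 1 ≤ G.degree j) :
    ((G.degree j : ℝ) ^ ((3 : ℝ) / 2)) / Real.sqrt ((G.adjMatrix ℝ ^ 4) j j) ≤
      vertexEnergy G j := by
  set A := G.adjMatrix ℝ with hAdef
  have hAH : Aᴴ = A := by
    rw [Matrix.conjTranspose_eq_transpose_of_trivial, SimpleGraph.transpose_adjMatrix]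
  have hPSD := Matrix.posSemidef_self_mul_conjTranspose A
  set B := hPSD.sqrt with hBdef
  have hBPSD : B.PosSemidef := hPSD.posSemidef_sqrt
  have hBsymm : B.IsSymm := by
    have := hBPSD.isHermitian
    rwa [Matrix.IsHermitian, Matrix.conjTranspose_eq_transpose_of_trivial] at this
  have hB2 : B * B = A * A := by
    rw [hPSD.sqrt_mul_self, hAH]
  -- S := sqrt of B
  set S := hBPSD.sqrt with hSdef
  have hSPSD : S.PosSemidef := hBPSD.posSemidef_sqrt
  have hSsymm : S.IsSymm := by
    have := hSPSD.isHermitian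
    rwa [Matrix.IsHermitian, Matrix.conjTranspose_eq_transpose_of_trivial] at this
  have hS2 : S * S = B := hBPSD.sqrt_mul_self
  have hSpow : ∀ r : ℕ, S ^ (2 * r) = B ^ r := by
    intro r
    rw [pow_mul, sq, hS2]
  -- abbreviations
  set E := B j j with hE
  set d := (G.degree j : ℝ) with hdd
  have hd1 : (1 : ℝ) ≤ d := by rw [hdd]; exact_mod_cast hd
  have hd0 : (0 : ℝ) < d := lt_of_lt_of_le one_pos hd1
  have hdB : (B ^ 2) j j = d := by
    rw [sq, hB2, hdd, hAdef]
    exact_mod_cast G.adjMatrix_mul_self_apply_self j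
  have hA4 : (A ^ 4) j j = (B ^ 4) j j := by
    have : A ^ 4 = B ^ 4 := by
      have h2 : A ^ 2 = B ^ 2 := by rw [sq, sq, hB2]
      calc A ^ 4 = A ^ 2 * A ^ 2 := by rw [← pow_add]
        _ = B ^ 2 * B ^ 2 := by rw [h2]
        _ = B ^ 4 := by rw [← pow_add]
    rw [this]
  set M := (B ^ 4) j j with hM
  -- step 1 : ((B^2)jj)^2 ≤ B jj * (B^3) jj
  have step1 : ((B ^ 2) j j) ^ 2 ≤ E * (B ^ 3) j j := by
    have h := sym_pow_diag_sq_le S hSsymm 1 3 j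
    have e1 : ((S ^ (1 + 3)) j j) = (B ^ 2) j j := by
      rw [show (1 + 3 : ℕ) = 2 * 2 from rfl, hSpow]
    have e2 : (S ^ (2 * 1)) j j = E := by rw [hSpow, pow_one, hE]
    have e3 : (S ^ (2 * 3)) j j = (B ^ 3) j j := by rw [hSpow]
    rwa [e1, e2, e3] at h
  -- step 2 : ((B^3)jj)^2 ≤ (B^2) jj * (B^4) jj
  have step2 : ((B ^ 3) j j) ^ 2 ≤ (B ^ 2) j j * M := by
    have h := sym_pow_diag_sq_le B hBsymm 1 2 j
    rwa [show (1 + 2 : ℕ) = 3 from rfl, show (2 * 1 : ℕ) = 2 from rfl,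
      show (2 * 2 : ℕ) = 4 from rfl] at h
  have hE0 : 0 ≤ E := by simpa using hBPSD.2 (Finsupp.single j 1)
  have hB3nn : 0 ≤ (B ^ 3) j j := by
    nlinarith [sq_nonneg ((B ^ 2) j j), hdB, hd0]
  have hMnn : 0 ≤ M := by nlinarith [hdB]
  -- main inequality: d ^ 3 ≤ E ^ 2 * M
  have main : d ^ 3 ≤ E ^ 2 * M := by
    have h4 : d ^ 4 ≤ E ^ 2 * (d * M) := by
      have h1 : d ^ 4 ≤ (E * (B ^ 3) j j) ^ 2 := by
        have := step1
        rw [hdB] at this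
        nlinarith [sq_nonneg d, hd0.le, this]
      have h2 : (E * (B ^ 3) j j) ^ 2 ≤ E ^ 2 * ((B ^ 2) j j * M) := by
        have := step2
        nlinarith [sq_nonneg E]
      rw [hdB] at h2
      linarith
    nlinarith [hd0]
  have hM0 : 0 < M := by nlinarith [pow_pos hd0 3, sq_nonneg E]
  -- conclude
  have hgoal : d ^ ((3 : ℝ) / 2) ≤ E * Real.sqrt M := by
    have h1 : d ^ ((3 : ℝ) / 2) = Real.sqrt (d ^ 3) := by
      rw [Real.sqrt_eq_rpow, ← Real.rpow_natCast d 3, ← Real.rpow_mul hd0.le]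
      norm_num
    rw [h1]
    calc Real.sqrt (d ^ 3) ≤ Real.sqrt (E ^ 2 * M) := Real.sqrt_le_sqrt main
      _ = E * Real.sqrt M := by
          rw [Real.sqrt_mul (sq_nonneg E), Real.sqrt_sq hE0]
  have hsqrtM : 0 < Real.sqrt M := Real.sqrt_pos.mpr hM0
  have hVE : vertexEnergy G j = E := rfl
  rw [hVE, hA4, div_le_iff₀ hsqrtM]
  exact hgoal
end

section
/- Let G be a finite simple graph and v a vertex with deg(v) ≤ 4. Then E_G(v) ≤ 2, with equality if and only if the connected component of v is a star on 5 vertices (four leaves) with v as its center. -/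
open Matrix Finset

/-- If `S` is PSD and `S² x = 4 x` then `S x = 2 x`. -/
lemma sqrt_eigen_aux {n : ℕ} {S : Matrix (Fin n) (Fin n) ℝ} (hS : S.PosSemidef)
    {x : Fin n → ℝ} (h : (S * S) *ᵥ x = (4:ℝ) • x) : S *ᵥ x = (2:ℝ) • x := by
  set y := S *ᵥ x - (2:ℝ) • x with hy
  have h1 : S *ᵥ y = (-2:ℝ) • y := by
    rw [hy, mulVec_sub, mulVec_smul, mulVec_mulVec, h]
    module
  have h2 : y ⬝ᵥ (S *ᵥ y) = -(2:ℝ) * (y ⬝ᵥ y) := by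
    rw [h1, dotProduct_smul, smul_eq_mul]
  have h3 : 0 ≤ y ⬝ᵥ (S *ᵥ y) := by
    have := hS.re_dotProduct_nonneg y
    simpa using this
  have h5 : 0 ≤ y ⬝ᵥ y := Finset.sum_nonneg fun i _ => mul_self_nonneg _
  have h4 : y ⬝ᵥ y = 0 := by nlinarith
  have h6 : y = 0 := by rwa [dotProduct_self_eq_zero] at h4
  exact sub_eq_zero.mp h6

/-- If `(A²)_{uv} = 0` for all `u ≠ v`, then the component of `v` is a star centered at `v`. -/
lemma star_of_zero_aux {n : ℕ} (G : SimpleGraph (Fin n)) [DecidableRel G.Adj] (v : Fin n)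
    (h0 : ∀ u, u ≠ v → (G.adjMatrix ℝ * G.adjMatrix ℝ) u v = 0) :
    ∀ u w : Fin n, G.Reachable v u → G.Adj u w → u = v ∨ w = v := by
  classical
  have hcommon : ∀ x w : Fin n, G.Adj x w → G.Adj w v → x = v := by
    intro x w hxw hwv
    by_contra hx
    have hz := h0 x hx
    rw [Matrix.mul_apply] at hz
    have hterm : ∀ j ∈ Finset.univ, (0:ℝ) ≤ G.adjMatrix ℝ x j * G.adjMatrix ℝ j v := by
      intro j _
      apply mul_nonneg <;> simp [SimpleGraph.adjMatrix_apply] <;> positivity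
    have := (Finset.sum_eq_zero_iff_of_nonneg hterm).mp hz w (Finset.mem_univ w)
    rw [SimpleGraph.adjMatrix_apply, SimpleGraph.adjMatrix_apply, if_pos hxw, if_pos hwv] at this
    norm_num at this
  have hreach : ∀ (a b : Fin n) (p : G.Walk a b), b = v → a = v ∨ G.Adj v a := by
    intro a b p
    induction p with
    | nil => intro h; left; exact h
    | @cons a b c h q ih =>
      intro hc
      rcases ih hc with rfl | hb
      · right; exact h.symm
      · left; exact hcommon a b h hb.symm
  intro u w hr hadj
  rcases eq_or_ne u v with rfl | hu
  · left; rfl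
  · obtain ⟨p⟩ := hr
    rcases hreach u v p.reverse rfl with rfl | hvu
    · left; rfl
    · right
      exact hcommon w u hadj.symm hvu.symm

/-- If the component of `v` is a star centered at `v`, then `(A²)_{uv} = 0` for `u ≠ v`. -/
lemma zero_of_star_aux {n : ℕ} (G : SimpleGraph (Fin n)) [DecidableRel G.Adj] (v : Fin n)
    (hstar : ∀ u w : Fin n, G.Reachable v u → G.Adj u w → u = v ∨ w = v) :
    ∀ u, u ≠ v → (G.adjMatrix ℝ * G.adjMatrix ℝ) u v = 0 := by
  classical
  intro u hu
  rw [Matrix.mul_apply]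
  apply Finset.sum_eq_zero
  intro j _
  by_cases huj : G.Adj u j
  · by_cases hjv : G.Adj j v
    · exfalso
      have hr : G.Reachable v j := (hjv.symm).reachable
      rcases hstar j u hr huj.symm with rfl | rfl
      · exact (G.loopless.irrefl _) hjv
      · exact hu rfl
    · simp [SimpleGraph.adjMatrix_apply, hjv]
  · simp [SimpleGraph.adjMatrix_apply, huj]

theorem stmt_10 {n : ℕ} (G : SimpleGraph (Fin n)) [DecidableRel G.Adj]
    (v : Fin n) (hd : G.degree v ≤ 4) :
    vertexEnergy G v ≤ 2 ∧
    (vertexEnergy G v = 2 ↔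
      (G.degree v = 4 ∧
        ∀ u w : Fin n, G.Reachable v u → G.Adj u w → u = v ∨ w = v)) := by
  classical
  set A := G.adjMatrix ℝ with hAdef
  have hAH : Aᴴ = A := by
    ext i j
    rw [conjTranspose_apply, star_trivial]
    exact (G.isSymm_adjMatrix (α := ℝ)).apply i j
  set hP := Matrix.posSemidef_self_mul_conjTranspose A with hPdef
  set S : Matrix (Fin n) (Fin n) ℝ := hP.1.eigenvectorUnitary.1 *
    diagonal ((RCLike.ofReal : ℝ → ℝ) ∘ (√·) ∘ hP.1.eigenvalues) *
    (star hP.1.eigenvectorUnitary : Matrix (Fin n) (Fin n) ℝ) with hSdef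
  have hE : vertexEnergy G v = S v v := rfl
  have hS : S.PosSemidef := by
    have hD : (diagonal ((RCLike.ofReal : ℝ → ℝ) ∘ (√·) ∘ hP.1.eigenvalues)).PosSemidef := by
      rw [posSemidef_diagonal_iff]
      intro i
      simp [Real.sqrt_nonneg]
    have := hD.mul_mul_conjTranspose_same (hP.1.eigenvectorUnitary.1)
    rw [hSdef]
    simpa [Unitary.coe_star, star_eq_conjTranspose] using this
  have hSS : S * S = A * A := by
    have hU : (star hP.1.eigenvectorUnitary : Matrix (Fin n) (Fin n) ℝ) *
        hP.1.eigenvectorUnitary.1 = 1 := Unitary.star_mul_self_of_mem hP.1.eigenvectorUnitary.2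
    have e1 : S * S = hP.1.eigenvectorUnitary.1 *
        (diagonal ((RCLike.ofReal : ℝ → ℝ) ∘ (√·) ∘ hP.1.eigenvalues) *
          diagonal ((RCLike.ofReal : ℝ → ℝ) ∘ (√·) ∘ hP.1.eigenvalues)) *
        (star hP.1.eigenvectorUnitary : Matrix (Fin n) (Fin n) ℝ) := by
      rw [hSdef]
      simp only [mul_assoc]
      rw [← mul_assoc (star hP.1.eigenvectorUnitary : Matrix (Fin n) (Fin n) ℝ), hU, one_mul]
    rw [e1, diagonal_mul_diagonal]
    have e2 : (fun i => ((RCLike.ofReal : ℝ → ℝ) ∘ (√·) ∘ hP.1.eigenvalues) i *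
        ((RCLike.ofReal : ℝ → ℝ) ∘ (√·) ∘ hP.1.eigenvalues) i) =
        (RCLike.ofReal : ℝ → ℝ) ∘ hP.1.eigenvalues := by
      funext i
      simp only [Function.comp_apply]
      exact Real.mul_self_sqrt (hP.eigenvalues_nonneg i)
    rw [e2]
    have := hP.1.spectral_theorem
    rw [Unitary.conjStarAlgAut_apply] at this
    exact this.symm.trans (by rw [hAH])
  have hsym : ∀ i j, S i j = S j i := by
    intro i j
    have := hS.1.apply i j
    simpa using this.symm
  have hdegAA : (A * A) v v = (G.degree v : ℝ) := G.adjMatrix_mul_self_apply_self v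
  have hsum : ∑ j, (S v j)^2 = (G.degree v : ℝ) := by
    calc ∑ j, (S v j)^2 = ∑ j, S v j * S j v := by
          refine Finset.sum_congr rfl fun j _ => ?_
          rw [sq, hsym v j]
      _ = (S * S) v v := (Matrix.mul_apply).symm
      _ = (A * A) v v := by rw [hSS]
      _ = (G.degree v : ℝ) := hdegAA
  have hd4 : (G.degree v : ℝ) ≤ 4 := by exact_mod_cast hd
  have hb : (S v v)^2 ≤ (G.degree v : ℝ) := by
    rw [← hsum]
    exact Finset.single_le_sum (f := fun j => (S v j)^2) (fun j _ => sq_nonneg _) (Finset.mem_univ v)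
  have hnn : 0 ≤ S v v := by
    have h := hS.re_dotProduct_nonneg (Pi.single v 1)
    simpa [dotProduct, Pi.single_apply, Finset.sum_ite_eq'] using h
  have hle : S v v ≤ 2 := by nlinarith [sq_nonneg (S v v - 2)]
  refine ⟨by rw [hE]; exact hle, ?_⟩
  constructor
  · -- forward direction
    intro h2
    rw [hE] at h2
    have hdeg4 : G.degree v = 4 := by
      have h4 : (4:ℝ) ≤ (G.degree v : ℝ) := by nlinarith
      have : (4:ℕ) ≤ G.degree v := by exact_mod_cast h4
      omega
    have hzero : ∀ j, j ≠ v → S v j = 0 := by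
      have hsplit : ∑ j ∈ Finset.univ \ {v}, (S v j)^2 = 0 := by
        have := Finset.sum_eq_sum_sdiff_singleton_add (Finset.mem_univ v) (fun j => (S v j)^2)
        rw [hsum, hdeg4] at this
        rw [h2] at this
        push_cast at this
        linarith
      intro j hj
      have := (Finset.sum_eq_zero_iff_of_nonneg (fun j _ => sq_nonneg (S v j))).mp hsplit j
        (by simp [hj])
      exact pow_eq_zero_iff (by norm_num) |>.mp this
    have h0 : ∀ u, u ≠ v → (A * A) u v = 0 := by
      intro u hu
      rw [← hSS, Matrix.mul_apply]
      apply Finset.sum_eq_zero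
      intro j _
      rcases eq_or_ne j v with rfl | hj
      · rw [hsym u j, hzero u hu, zero_mul]
      · rw [hsym j v, hzero j hj, mul_zero]
    exact ⟨hdeg4, star_of_zero_aux G v h0⟩
  · -- backward direction
    rintro ⟨hdeg4, hstar⟩
    have h0 : ∀ u, u ≠ v → (A * A) u v = 0 := zero_of_star_aux G v hstar
    set x : Fin n → ℝ := Pi.single v 1 with hx
    have hAAx : (A * A) *ᵥ x = (4:ℝ) • x := by
      funext u
      rw [hx, Matrix.mulVec_single]
      rcases eq_or_ne u v with rfl | hu
      · simp [hdegAA, hdeg4, Pi.single_apply]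
      · simp [h0 u hu, Pi.single_apply, hu]
    have hSx : S *ᵥ x = (2:ℝ) • x := by
      apply sqrt_eigen_aux hS
      rw [hSS]
      exact hAAx
    have := congrFun hSx v
    rw [hx, Matrix.mulVec_single] at this
    simp [Pi.single_apply] at this
    rw [hE]
    exact this
end

section
/- Every finite simple d-regular graph with d ≥ 1 is completely non-hypoenergetic: E_G(v_i) ≥ 1 for every vertex v_i. -/
open Matrix Finset

theorem stmt_14 {n : ℕ} (G : SimpleGraph (Fin n)) [DecidableRel G.Adj]
    (d : ℕ) (hreg : G.IsRegularOfDegree d) (hd : 1 ≤ d) :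
    ∀ i : Fin n, 1 ≤ vertexEnergy G i := by
  classical
  intro i
  set A := G.adjMatrix ℝ with hAdef
  have hAH : Aᴴ = A := by
    ext j k
    simp [conjTranspose_apply, hAdef, SimpleGraph.adjMatrix_apply, G.adj_comm]
  have hS := Matrix.posSemidef_self_mul_conjTranspose A
  set hH : (A * Aᴴ).IsHermitian := hS.1 with hHdef
  set U : Matrix (Fin n) (Fin n) ℝ := (Matrix.IsHermitian.eigenvectorUnitary hH : Matrix (Fin n) (Fin n) ℝ) with hU
  set μ : Fin n → ℝ := hH.eigenvalues with hμ
  -- column sums of A are all d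
  have hcolsum : ∀ u : Fin n, ∑ j, A j u = (d : ℝ) := by
    intro u
    have : ∀ j, A j u = A u j := by
      intro j; simp [hAdef, SimpleGraph.adjMatrix_apply, G.adj_comm]
    simp_rw [this]
    have hb : ∑ j, A u j = (#(G.neighborFinset u) : ℝ) := by
      simp [hAdef, SimpleGraph.adjMatrix_apply, Finset.sum_boole,
        SimpleGraph.neighborFinset_eq_filter]
    rw [hb, show #(G.neighborFinset u) = G.degree u from rfl, hreg u]
  -- entry formula
  have entry : ∀ (w : Fin n → ℝ), (U * diagonal w * star U) i i = ∑ k, w k * U i k ^ 2 := by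
    intro w
    simp only [Matrix.mul_apply, Matrix.star_apply, star_trivial, Matrix.diagonal_apply,
      mul_ite, mul_zero, Finset.sum_ite_eq', Finset.mem_univ, if_true]
    exact Finset.sum_congr rfl fun k _ => by ring
  -- eigenvalue bound
  have hev : ∀ k, μ k ≤ (d : ℝ)^2 := by
    intro k
    set v : Fin n → ℝ := ⇑(hH.eigenvectorBasis k) with hv
    have hmv : (A * Aᴴ) *ᵥ v = μ k • v := hH.mulVec_eigenvectorBasis k
    have hUU' : star U * U = 1 := Matrix.mem_unitaryGroup_iff'.mp (Matrix.IsHermitian.eigenvectorUnitary hH).2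
    have hnv : ∑ j, v j ^ 2 = 1 := by
      have h1 := congrFun (congrFun (congrArg (fun M => (M : Matrix (Fin n) (Fin n) ℝ)) hUU') k) k
      simp only [Matrix.mul_apply, Matrix.star_apply, star_trivial, Matrix.one_apply_eq] at h1
      have h2 : ∀ j, U j k = v j := fun j => hH.eigenvectorUnitary_apply j k
      calc ∑ j, v j ^ 2 = ∑ j, U j k * U j k := by
            exact Finset.sum_congr rfl fun j _ => by rw [h2 j]; ring
        _ = 1 := h1
    have key : μ k = ∑ j, (A *ᵥ v) j ^ 2 := by
      have e1 : v ⬝ᵥ ((A * Aᴴ) *ᵥ v) = μ k := by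
        rw [hmv, dotProduct_smul]
        simp only [smul_eq_mul]
        rw [show v ⬝ᵥ v = ∑ j, v j ^2 from Finset.sum_congr rfl fun j _ => by ring, hnv, mul_one]
      have e2 : v ⬝ᵥ ((A * Aᴴ) *ᵥ v) = ∑ j, (A *ᵥ v) j ^ 2 := by
        rw [hAH, ← Matrix.mulVec_mulVec, Matrix.dotProduct_mulVec]
        rw [show v ᵥ* A = A *ᵥ v by
          rw [← Matrix.mulVec_transpose, show Aᵀ = A from SimpleGraph.transpose_adjMatrix G]]
        exact Finset.sum_congr rfl fun j _ => by ring
      rw [← e1, e2]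
    rw [key]
    have step1 : ∀ j, (A *ᵥ v) j ^ 2 ≤ (d:ℝ) * ∑ u ∈ G.neighborFinset j, v u ^ 2 := by
      intro j
      rw [SimpleGraph.adjMatrix_mulVec_apply]
      have := sq_sum_le_card_mul_sum_sq (s := G.neighborFinset j) (f := v)
      have hcard : (#(G.neighborFinset j) : ℝ) = (d : ℝ) := by
        rw [G.card_neighborFinset_eq_degree j, hreg j]
      calc (∑ u ∈ G.neighborFinset j, v u) ^ 2
          ≤ (#(G.neighborFinset j) : ℝ) * ∑ u ∈ G.neighborFinset j, v u ^ 2 := by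
            exact_mod_cast this
        _ = (d:ℝ) * ∑ u ∈ G.neighborFinset j, v u ^ 2 := by rw [hcard]
    calc ∑ j, (A *ᵥ v) j ^ 2 ≤ ∑ j, (d:ℝ) * ∑ u ∈ G.neighborFinset j, v u ^ 2 :=
          Finset.sum_le_sum fun j _ => step1 j
      _ = (d:ℝ) * ∑ j, ∑ u, A j u * v u ^ 2 := by
          rw [Finset.mul_sum]
          refine Finset.sum_congr rfl fun j _ => ?_
          congr 1
          rw [hAdef]
          simp [SimpleGraph.adjMatrix_apply, SimpleGraph.neighborFinset_eq_filter, Finset.sum_filter]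
      _ = (d:ℝ) * ∑ u, (∑ j, A j u) * v u ^ 2 := by
          rw [Finset.sum_comm]
          congr 1
          exact Finset.sum_congr rfl fun u _ => by rw [Finset.sum_mul]
      _ = (d:ℝ) * ((d:ℝ) * ∑ u, v u ^ 2) := by
          simp_rw [hcolsum]
          rw [← Finset.mul_sum]
      _ = (d:ℝ)^2 := by rw [hnv]; ring
  -- d = ∑ μ k * U i k ^2
  have hdiag : (d:ℝ) = ∑ k, μ k * U i k ^ 2 := by
    have hspec : A * Aᴴ = U * diagonal μ * star U := by
      have := hH.spectral_theorem
      exact this.trans (by rfl)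
    have h1 : (A * Aᴴ) i i = (d : ℝ) := by
      rw [hAH]
      rw [hAdef, SimpleGraph.adjMatrix_mul_self_apply_self, hreg i]
    rw [← h1, hspec, entry]
  -- the energy formula
  have hB : vertexEnergy G i = ∑ k, Real.sqrt (μ k) * U i k ^ 2 := by
    show (U * diagonal ((RCLike.ofReal : ℝ → ℝ) ∘ (√·) ∘ μ) * star U) i i = _
    exact entry _
  have hμnn : ∀ k, 0 ≤ μ k := fun k => hS.eigenvalues_nonneg k
  have hsqrtle : ∀ k, Real.sqrt (μ k) ≤ (d:ℝ) := by
    intro k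
    have := Real.sqrt_le_sqrt (hev k)
    rwa [Real.sqrt_sq (by positivity)] at this
  have hdpos : (0:ℝ) < d := by exact_mod_cast hd
  have main : (d:ℝ) ≤ (d:ℝ) * vertexEnergy G i := by
    rw [hB, Finset.mul_sum]
    calc (d:ℝ) = ∑ k, μ k * U i k ^ 2 := hdiag
      _ ≤ ∑ k, (d:ℝ) * (Real.sqrt (μ k) * U i k ^ 2) := by
          refine Finset.sum_le_sum fun k _ => ?_
          have h1 : μ k ≤ (d:ℝ) * Real.sqrt (μ k) := by
            nlinarith [Real.sq_sqrt (hμnn k), Real.sqrt_nonneg (μ k), hsqrtle k]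
          calc μ k * U i k ^ 2 ≤ ((d:ℝ) * Real.sqrt (μ k)) * U i k ^ 2 :=
                mul_le_mul_of_nonneg_right h1 (sq_nonneg _)
            _ = (d:ℝ) * (Real.sqrt (μ k) * U i k ^ 2) := by ring
  have main' : (d:ℝ) * 1 ≤ (d:ℝ) * vertexEnergy G i := by rwa [mul_one]
  exact le_of_mul_le_mul_left main' hdpos
end

section
/- Let G be a finite simple connected graph on n ≥ 2 vertices with adjacency matrix A, eigenvalues λ_1 ≥ λ_2 ≥ … ≥ λ_n, and let U = (u_{ij}) be an orthogonal matrix whose j-th column is a unit eigenvector of A for λ_j; set p_{ij} = u_{ij}^2. Then for every vertex v_i of degree d_i, E_G(v_i) ≤ p_{i1}|λ_1| + √((d_i − p_{i1}λ_1^2)(1 − p_{i1})). -/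
open Matrix Finset

theorem stmt_18 {n : ℕ} (hn : 2 ≤ n) (G : SimpleGraph (Fin n)) [DecidableRel G.Adj]
    (hconn : G.Connected)
    (lam : Fin n → ℝ) (hdec : ∀ j k : Fin n, j ≤ k → lam k ≤ lam j)
    (U : Matrix (Fin n) (Fin n) ℝ) (hU : U ∈ Matrix.orthogonalGroup (Fin n) ℝ)
    (hEig : ∀ j, (G.adjMatrix ℝ) *ᵥ (fun i => U i j) = lam j • (fun i => U i j))
    (i : Fin n) :
    vertexEnergy G i ≤
      (U i ⟨0, by omega⟩) ^ 2 * |lam ⟨0, by omega⟩| +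
        Real.sqrt (((G.degree i : ℝ) - (U i ⟨0, by omega⟩) ^ 2 * (lam ⟨0, by omega⟩) ^ 2) *
          (1 - (U i ⟨0, by omega⟩) ^ 2)) := by
  set A : Matrix (Fin n) (Fin n) ℝ := G.adjMatrix ℝ with hA
  have hUUT : U * Uᵀ = 1 := by
    have := (Matrix.mem_orthogonalGroup_iff (Fin n) ℝ).mp hU
    simpa [Matrix.star_eq_conjTranspose] using this
  have hUTU : Uᵀ * U = 1 := by
    have := (Matrix.mem_orthogonalGroup_iff' (Fin n) ℝ).mp hU
    simpa [Matrix.star_eq_conjTranspose] using this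
  have hAU : A * U = U * Matrix.diagonal lam := by
    ext a b
    have h := congrFun (hEig b) a
    simp only [Matrix.mulVec, dotProduct, Pi.smul_apply, smul_eq_mul] at h
    rw [Matrix.mul_apply, Matrix.mul_diagonal, h]; ring
  have hAeq : A = U * Matrix.diagonal lam * Uᵀ := by
    calc A = A * (U * Uᵀ) := by rw [hUUT, Matrix.mul_one]
    _ = (A * U) * Uᵀ := by rw [Matrix.mul_assoc]
    _ = U * Matrix.diagonal lam * Uᵀ := by rw [hAU]
  have key : ∀ d e : Fin n → ℝ,
      (U * Matrix.diagonal d * Uᵀ) * (U * Matrix.diagonal e * Uᵀ)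
        = U * Matrix.diagonal (fun j => d j * e j) * Uᵀ := by
    intro d e
    simp only [Matrix.mul_assoc]
    rw [← Matrix.mul_assoc Uᵀ U, hUTU, Matrix.one_mul,
      ← Matrix.mul_assoc (Matrix.diagonal d), Matrix.diagonal_mul_diagonal]
  set B : Matrix (Fin n) (Fin n) ℝ := U * Matrix.diagonal (fun j => |lam j|) * Uᵀ with hB
  have hBpsd : B.PosSemidef := by
    have hd : (Matrix.diagonal (fun j => |lam j|)).PosSemidef :=
      Matrix.posSemidef_diagonal_iff.mpr fun j => abs_nonneg _
    simpa [hB] using hd.mul_mul_conjTranspose_same U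
  have hsq : B ^ 2 = A * Aᴴ := by
    have hAH : Aᴴ = A := by
      simp [hA, Matrix.conjTranspose_eq_transpose_of_trivial, SimpleGraph.transpose_adjMatrix]
    have habs : (fun j => |lam j| * |lam j|) = fun j => lam j * lam j := by
      funext j; rw [← abs_mul, abs_mul_self]
    rw [hAH, hAeq, pow_two, hB, key, key, habs]
  have hv : vertexEnergy G i = B i i := by
    open scoped MatrixOrder ComplexOrder in
    have h1 : CFC.sqrt (A * Aᴴ) = B :=
      CFC.sqrt_unique (by rw [← pow_two]; exact hsq) hBpsd.nonneg
    rw [CFC.sqrt_eq_cfc, cfc_nnreal_eq_real _ _ (Matrix.posSemidef_self_mul_conjTranspose A).nonneg,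
      (Matrix.posSemidef_self_mul_conjTranspose A).1.cfc_eq] at h1
    rw [← h1, IsHermitian.cfc, Unitary.conjStarAlgAut_apply]
    have hf : (fun x : ℝ => ((NNReal.sqrt x.toNNReal : NNReal) : ℝ)) = (√·) := by
      funext x; rw [Real.sqrt]
    rw [hf]
    rfl
  have hBii : B i i = ∑ j, |lam j| * (U i j) ^ 2 := by
    rw [hB, Matrix.mul_apply]
    apply Finset.sum_congr rfl; intro j _
    rw [Matrix.mul_diagonal, Matrix.transpose_apply]; ring
  have hrow : ∑ j, (U i j) ^ 2 = 1 := by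
    have := congrFun (congrFun hUUT i) i
    simpa [Matrix.mul_apply, Matrix.one_apply, pow_two] using this
  have hdeg : ∑ j, (lam j) ^ 2 * (U i j) ^ 2 = (G.degree i : ℝ) := by
    have h2 : A * A = U * Matrix.diagonal (fun j => (lam j)^2) * Uᵀ := by
      have hp : (fun j => lam j * lam j) = fun j => (lam j) ^ 2 := by
        funext j; rw [pow_two]
      rw [hAeq, key, hp]
    have h4 : (A * A) i i = (G.degree i : ℝ) := by
      simpa [hA] using G.adjMatrix_mul_self_apply_self (α := ℝ) i
    rw [← h4, h2, Matrix.mul_apply]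
    apply Finset.sum_congr rfl; intro j _
    rw [Matrix.mul_diagonal, Matrix.transpose_apply]; ring
  set z : Fin n := ⟨0, by omega⟩
  rw [hv, hBii, ← Finset.sum_erase_add _ _ (Finset.mem_univ z)]
  have hs1 : ∑ j ∈ Finset.univ.erase z, (lam j) ^ 2 * (U i j) ^ 2
      = (G.degree i : ℝ) - (U i z) ^ 2 * (lam z) ^ 2 := by
    have h := Finset.sum_erase_add Finset.univ (fun j => (lam j) ^ 2 * (U i j) ^ 2)
      (Finset.mem_univ z)
    rw [hdeg] at h; beta_reduce at h; linarith
  have hs2 : ∑ j ∈ Finset.univ.erase z, (U i j) ^ 2 = 1 - (U i z) ^ 2 := by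
    have h := Finset.sum_erase_add Finset.univ (fun j => (U i j) ^ 2) (Finset.mem_univ z)
    rw [hrow] at h; beta_reduce at h; linarith
  have key2 : ∑ j ∈ Finset.univ.erase z, |lam j| * (U i j) ^ 2 ≤
      Real.sqrt (((G.degree i : ℝ) - (U i z) ^ 2 * (lam z) ^ 2) * (1 - (U i z) ^ 2)) := by
    have hnn : 0 ≤ ∑ j ∈ Finset.univ.erase z, |lam j| * (U i j) ^ 2 :=
      Finset.sum_nonneg fun j _ => mul_nonneg (abs_nonneg _) (sq_nonneg _)
    have hprodnn : 0 ≤ ((G.degree i : ℝ) - (U i z) ^ 2 * (lam z) ^ 2) * (1 - (U i z) ^ 2) := by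
      rw [← hs1, ← hs2]
      exact mul_nonneg
        (Finset.sum_nonneg fun j _ => mul_nonneg (sq_nonneg _) (sq_nonneg _))
        (Finset.sum_nonneg fun j _ => sq_nonneg _)
    rw [Real.le_sqrt hnn hprodnn]
    have cs := Finset.sum_mul_sq_le_sq_mul_sq (Finset.univ.erase z)
      (fun j => |lam j| * |U i j|) (fun j => |U i j|)
    have e1 : ∑ j ∈ Finset.univ.erase z, (|lam j| * |U i j|) * |U i j|
        = ∑ j ∈ Finset.univ.erase z, |lam j| * (U i j) ^ 2 := by
      apply Finset.sum_congr rfl; intro j _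
      rw [mul_assoc, ← abs_mul, abs_mul_self, ← pow_two]
    have e2 : ∑ j ∈ Finset.univ.erase z, (|lam j| * |U i j|) ^ 2
        = ∑ j ∈ Finset.univ.erase z, (lam j) ^ 2 * (U i j) ^ 2 := by
      apply Finset.sum_congr rfl; intro j _
      rw [mul_pow, sq_abs, sq_abs]
    have e3 : ∑ j ∈ Finset.univ.erase z, (|U i j|) ^ 2
        = ∑ j ∈ Finset.univ.erase z, (U i j) ^ 2 := by
      apply Finset.sum_congr rfl; intro j _; rw [sq_abs]
    rw [e1, e2, e3, hs1, hs2] at cs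
    exact cs
  have hz : |lam z| * (U i z) ^ 2 = (U i z) ^ 2 * |lam z| := by ring
  linarith
end
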